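/- For every t ∈ [0,1], setting a_t = 1 − √((1−t)/(1+t)), b_t = 1 − ln(1+t) − √((1−t)/(1+t)), and g_t(x) = ((t+1)/2) e^{−x} (x − 1 + √((1−t)/(1+t)))², one has ∫₀^{a_t} g_t(x) dx = ∫₀^{b_t} e^{−x} dx and ∫_{a_t}^∞ g_t(x) dx = ∫_{b_t}^∞ e^{−x} dx. -/

import Mathlib

open MeasureTheory Set Real

private lemma hasDerivF (c s : ℝ) (x : ℝ) :
    HasDerivAt (fun y => -(c * (Real.exp (-y) * ((y - 1 + s)^2 + 2*(y - 1 + s) + 2))))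
      (c * Real.exp (-x) * (x - 1 + s)^2) x := by
  have hexp : HasDerivAt (fun y : ℝ => Real.exp (-y)) (-Real.exp (-x)) x := by
    simpa [Function.comp_def] using (Real.hasDerivAt_exp (-x)).comp x ((hasDerivAt_id x).neg)
  have hpoly : HasDerivAt (fun y : ℝ => (y - 1 + s)^2 + 2*(y - 1 + s) + 2)
      (2*(x - 1 + s) + 2) x := by
    have h1 : HasDerivAt (fun y : ℝ => y - 1 + s) 1 x := by
      simpa using ((hasDerivAt_id x).sub_const 1).add_const s
    have h2 := h1.pow 2
    have h3 := h1.const_mul 2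
    simpa [mul_comm] using (h2.add h3).add_const 2
  have := ((hexp.mul hpoly).const_mul c).neg
  exact this.congr_deriv (by ring)

private lemma hasDerivE (x : ℝ) :
    HasDerivAt (fun y : ℝ => -Real.exp (-y)) (Real.exp (-x)) x := by
  have hexp : HasDerivAt (fun y : ℝ => Real.exp (-y)) (-Real.exp (-x)) x := by
    simpa [Function.comp_def] using (Real.hasDerivAt_exp (-x)).comp x ((hasDerivAt_id x).neg)
  have h := hexp.neg; rw [neg_neg] at h; exact h

private lemma tendF (c s : ℝ) :
    Filter.Tendsto (fun y => -(c * (Real.exp (-y) * ((y - 1 + s)^2 + 2*(y - 1 + s) + 2))))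
      Filter.atTop (nhds 0) := by
  have key : Filter.Tendsto (fun z : ℝ => Real.exp (-z) * (z^2 + 2*z + 2))
      Filter.atTop (nhds 0) := by
    have h2 := Real.tendsto_pow_mul_exp_neg_atTop_nhds_zero 2
    have h1 := Real.tendsto_pow_mul_exp_neg_atTop_nhds_zero 1
    have h0 := Real.tendsto_exp_neg_atTop_nhds_zero
    have := (h2.add ((h1.const_mul 2).add (h0.const_mul 2)))
    convert this using 2 with z
    · ring
    · norm_num
  have hz : Filter.Tendsto (fun y : ℝ => y - 1 + s) Filter.atTop Filter.atTop := by
    apply Filter.tendsto_atTop_add_const_right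
    exact Filter.tendsto_atTop_add_const_right _ _ Filter.tendsto_id
  have comp := key.comp hz
  have hexp : ∀ y : ℝ, Real.exp (-(y - 1 + s)) = Real.exp (1 - s) * Real.exp (-y) := by
    intro y
    rw [← Real.exp_add]; ring_nf
  have := ((comp.const_mul (Real.exp (s - 1))).const_mul c).neg
  convert this using 2 with y
  · simp only [Function.comp]
    rw [hexp y]
    have h : Real.exp (s-1) * Real.exp (1-s) = 1 := by rw [← Real.exp_add]; simp
    linear_combination (c * Real.exp (-y) * ((y-1+s)^2+2*(y-1+s)+2)) * h
  · simp

/-- For `t ∈ [0,1]`, with `a_t = 1 − √((1−t)/(1+t))`,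
`b_t = 1 − ln(1+t) − √((1−t)/(1+t))` and
`g_t(x) = ((t+1)/2) e^{−x} (x − 1 + √((1−t)/(1+t)))²`, one has
`∫₀^{a_t} g_t = ∫₀^{b_t} e^{−x}` and `∫_{a_t}^∞ g_t = ∫_{b_t}^∞ e^{−x}`. -/
theorem split_normalization_gt (t : ℝ) (ht₀ : 0 ≤ t) (ht₁ : t ≤ 1) :
    (∫ x in (0:ℝ)..(1 - Real.sqrt ((1 - t) / (1 + t))),
        (t + 1) / 2 * exp (-x) * (x - 1 + Real.sqrt ((1 - t) / (1 + t)))^2 =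
      ∫ x in (0:ℝ)..(1 - Real.log (1 + t) - Real.sqrt ((1 - t) / (1 + t))), exp (-x)) ∧
    (∫ x in Ici (1 - Real.sqrt ((1 - t) / (1 + t))),
        (t + 1) / 2 * exp (-x) * (x - 1 + Real.sqrt ((1 - t) / (1 + t)))^2 =
      ∫ x in Ici (1 - Real.log (1 + t) - Real.sqrt ((1 - t) / (1 + t))), exp (-x)) := by
  have h1t : (0:ℝ) < 1 + t := by linarith
  set s := Real.sqrt ((1 - t) / (1 + t)) with hs
  set c := (t + 1) / 2 with hc
  have hs2 : s^2 = (1 - t) / (1 + t) :=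
    Real.sq_sqrt (div_nonneg (by linarith) (le_of_lt h1t))
  have hcs : c * (s^2 + 1) = 1 := by
    rw [hs2]; field_simp; ring
  have hb : Real.exp (-(1 - Real.log (1 + t) - s)) = (1 + t) * Real.exp (s - 1) := by
    rw [show -(1 - Real.log (1 + t) - s) = Real.log (1 + t) + (s - 1) by ring,
      Real.exp_add, Real.exp_log h1t]
  -- first integral
  have I1 : ∫ x in (0:ℝ)..(1 - s), c * exp (-x) * (x - 1 + s)^2
      = c * (s^2 + 1) - 2 * c * Real.exp (s - 1) := by
    rw [intervalIntegral.integral_eq_sub_of_hasDerivAt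
      (fun x _ => hasDerivF c s x)
      (by apply Continuous.intervalIntegrable; fun_prop)]
    rw [show -(1 - s) = s - 1 by ring]
    simp only [neg_zero, Real.exp_zero]
    ring
  have I2 : ∫ x in (0:ℝ)..(1 - Real.log (1 + t) - s), exp (-x)
      = 1 - (1 + t) * Real.exp (s - 1) := by
    rw [intervalIntegral.integral_eq_sub_of_hasDerivAt
      (fun x (_ : x ∈ _) => hasDerivE x)
      (by apply Continuous.intervalIntegrable; fun_prop)]
    rw [hb]; simp; ring
  have I3 : ∫ x in Ici (1 - s), c * exp (-x) * (x - 1 + s)^2 = 2 * c * Real.exp (s - 1) := by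
    rw [integral_Ici_eq_integral_Ioi]
    rw [integral_Ioi_of_hasDerivAt_of_nonneg
      (Continuous.continuousWithinAt (by fun_prop))
      (fun x _ => hasDerivF c s x)
      (fun x _ => by positivity)
      (tendF c s)]
    rw [show -(1 - s) = s - 1 by ring]
    ring_nf
  have I4 : ∫ x in Ici (1 - Real.log (1 + t) - s), exp (-x) = (1 + t) * Real.exp (s - 1) := by
    rw [integral_Ici_eq_integral_Ioi, integral_exp_neg_Ioi, hb]
  constructor
  · rw [I1, I2, hcs, hc]; ring_nf
  · rw [I3, I4]; rw [hc]; ring
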